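/- Let 0 → V → W → N → 0 be a short exact sequence of vector bundles on a projective variety Y over an algebraically closed field, with W ≅ O_Y^{⊕l} trivial. Then for any dominant proper morphism φ: Y_0 → Y with Y_0 integral, the pullback map H^0(Y, V) → H^0(Y_0, φ^*V) is an isomorphism. -/
import Mathlib


open CategoryTheory Limits

universe v u

/-- **Lemma 2.5: global sections of subbundles of trivial bundles do not grow
under dominant proper pullback.**
`C` is the category of coherent sheaves on a projective variety `Y` over an
algebraically closed field, `C'` that on an integral scheme `Y₀`, `P` the
pullback functor along a dominant proper morphism `φ : Y₀ → Y`, carrying the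
structure sheaf `O_Y` to `O_{Y₀}`.  Global sections `H⁰(E) = Hom(O, E)`, and the
pullback map on global sections is `s ↦ φ*(s)`.  For such `φ` this map is
injective for every sheaf, and bijective for the trivial bundle `W ≅ O_Y^{⊕l}`;
pullback preserves the exactness of `0 → V → W → N → 0`.  Conclusion: the
pullback map `H⁰(Y, V) → H⁰(Y₀, φ*V)` is an isomorphism. -/
theorem global_sections_iso_of_sub_of_trivial
    {C : Type u} [Category.{v} C] [Abelian C] [HasFiniteBiproducts C]
    {C' : Type u} [Category.{v} C'] [Abelian C']
    (P : C ⥤ C') [P.Additive]                    -- pullback φ*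
    (OY : C) (OY' : C') (hunit : P.obj OY ≅ OY')
    -- the short exact sequence 0 → V → W → N → 0 with W trivial:
    (V W N : C) (f : V ⟶ W) (g : W ⟶ N) (hfg : f ≫ g = 0)
    (hexact : (ShortComplex.mk f g hfg).ShortExact)
    (l : ℕ) (hW : W ≅ ⨁ fun _ : Fin l => OY)
    -- pullback preserves the exact sequence:
    (hfg' : P.map f ≫ P.map g = 0)
    (hexact' : (ShortComplex.mk (P.map f) (P.map g) hfg').ShortExact)
    -- pullback is injective on global sections (φ dominant, Y₀ integral):
    (hinj : ∀ (E : C), Function.Injective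
      (fun s : OY ⟶ E => hunit.inv ≫ P.map s))
    -- and bijective on global sections of the trivial bundle W:
    (hWbij : Function.Bijective (fun s : OY ⟶ W => hunit.inv ≫ P.map s)) :
    Function.Bijective (fun s : OY ⟶ V => hunit.inv ≫ P.map s) := by
  constructor
  · exact hinj V
  · intro t
    -- mono instances
    have hm : Mono f := hexact.mono_f
    have hm' : Mono (P.map f) := hexact'.mono_f
    obtain ⟨s, hs⟩ := hWbij.2 (t ≫ P.map f)
    simp only [] at hs
    have hsg : s ≫ g = 0 := by
      apply hinj N
      show hunit.inv ≫ P.map (s ≫ g) = hunit.inv ≫ P.map 0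
      rw [P.map_comp, P.map_zero, comp_zero, ← Category.assoc, hs,
        Category.assoc, ← P.map_comp, hfg, P.map_zero, comp_zero]
    obtain ⟨u, hu⟩ : ∃ u : OY ⟶ V, u ≫ f = s :=
      ⟨hexact.exact.lift s hsg, hexact.exact.lift_f s hsg⟩
    refine ⟨u, ?_⟩
    show hunit.inv ≫ P.map u = t
    have := hs
    rw [← hu, P.map_comp] at this
    exact (cancel_mono (P.map f)).1 (by simpa [Category.assoc] using this)
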